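/- arXiv:1903.03317 — 2 statements merged into one kernel-verified Lean document; each statement's English description precedes it below -/
import Mathlib

section
/- Let u : ℝᵈ → ℝ be measurable and let ρ : ℝᵈ × ℝᵈ → [0,∞) be measurable, bounded, and translation invariant (ρ(x+z,y+z) = ρ(x,y) for all x,y,z). Suppose y ↦ u(y)ρ(y,0) is absolutely integrable over ℝᵈ. Then for every fixed r > 0, with Δ₁ = {(x,y) ∈ Λ_ℓ × Λ_ℓ : x ∈ Λ_{ℓ−r}, |y−x| ≤ r} (for ℓ > r), one has limsup_{ℓ→∞} | (1/|Λ_ℓ|) ∫_{Δ₁} u(x−y) ρ(x,y) d(x,y) − ∫_{ℝᵈ} u(y) ρ(y,0) dy | ≤ ∫_{|y| > r} |u(y)| ρ(y,0) dy. -/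
open MeasureTheory ENNReal Filter
open Topology

/-- The box `Λ_ℓ = [-ℓ,ℓ]^d ⊂ ℝᵈ`. -/
def lam (d : ℕ) (ℓ : ℝ) : Set (EuclideanSpace ℝ (Fin d)) := {x | ∀ i, |x i| ≤ ℓ}

/-- The diagonal region `Δ₁ = {(x,y) ∈ Λ_ℓ² : x ∈ Λ_{ℓ-r}, |y-x| ≤ r}`. -/
def delta1 (d : ℕ) (ℓ r : ℝ) :
    Set (EuclideanSpace ℝ (Fin d) × EuclideanSpace ℝ (Fin d)) :=
  {p | p.1 ∈ lam d ℓ ∧ p.2 ∈ lam d ℓ ∧ p.1 ∈ lam d (ℓ - r) ∧ ‖p.2 - p.1‖ ≤ r}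

lemma coord_abs_le_norm {d : ℕ} (x : EuclideanSpace ℝ (Fin d)) (i : Fin d) : |x i| ≤ ‖x‖ := by
  rw [EuclideanSpace.norm_eq, ← Real.sqrt_sq_eq_abs (x i)]
  apply Real.sqrt_le_sqrt
  simpa using Finset.single_le_sum (f := fun j => ‖x j‖ ^ 2) (fun j _ => sq_nonneg _)
    (Finset.mem_univ i)

lemma volume_lam {d : ℕ} (s : ℝ) :
    volume (lam d s) = ENNReal.ofReal (2 * s) ^ d := by
  have h1 : lam d s
      = (MeasurableEquiv.toLp 2 (Fin d → ℝ)).symm ⁻¹'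
        (Set.univ.pi fun _ : Fin d => Set.Icc (-s) s) := by
    ext x
    simp only [lam, Set.mem_setOf_eq, Set.mem_preimage, Set.mem_pi, Set.mem_univ, forall_true_left,
      Set.mem_Icc, abs_le]
    exact ⟨fun h i => h i, fun h i => h i⟩
  rw [h1, (EuclideanSpace.volume_preserving_symm_measurableEquiv_toLp (Fin d)).measure_preimage
    ((MeasurableSet.univ_pi fun _ => measurableSet_Icc).nullMeasurableSet)]
  rw [volume_pi_pi]
  simp only [Real.volume_Icc, Finset.prod_const, Finset.card_univ, Fintype.card_fin]
  congr 1
  ring_nf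

/-- The involutive measurable equivalence `(x, y) ↦ (x, x - y)`. -/
noncomputable def subEquiv (d : ℕ) :
    (EuclideanSpace ℝ (Fin d) × EuclideanSpace ℝ (Fin d)) ≃ᵐ
      (EuclideanSpace ℝ (Fin d) × EuclideanSpace ℝ (Fin d)) where
  toFun p := (p.1, p.1 - p.2)
  invFun p := (p.1, p.1 - p.2)
  left_inv p := by simp
  right_inv p := by simp
  measurable_toFun := measurable_fst.prodMk (measurable_fst.sub measurable_snd)
  measurable_invFun := measurable_fst.prodMk (measurable_fst.sub measurable_snd)

lemma subEquiv_measurePreserving (d : ℕ) : MeasurePreserving (subEquiv d)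
    (volume : Measure (EuclideanSpace ℝ (Fin d) × EuclideanSpace ℝ (Fin d))) volume := by
  rw [Measure.volume_eq_prod]
  exact MeasurePreserving.skew_product (MeasurePreserving.id volume)
    (g := fun x y => x - y) (measurable_fst.sub measurable_snd)
    (Filter.Eventually.of_forall fun x => (Measure.measurePreserving_sub_left volume x).map_eq)

/-- For every fixed `r > 0`,
`limsup_{ℓ→∞} |(1/|Λ_ℓ|) ∫_{Δ₁} u(x-y) ρ(x,y) d(x,y) - ∫_{ℝᵈ} u(y) ρ(y,0) dy|
  ≤ ∫_{|y| > r} |u(y)| ρ(y,0) dy`, with `|Λ_ℓ| = (2ℓ)^d`. -/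
theorem delta1_limsup {d : ℕ} (hd : 1 ≤ d)
    (u : EuclideanSpace ℝ (Fin d) → ℝ) (humeas : Measurable u)
    (ρ : EuclideanSpace ℝ (Fin d) × EuclideanSpace ℝ (Fin d) → ℝ)
    (hρmeas : Measurable ρ) (hρnonneg : ∀ p, 0 ≤ ρ p)
    (ξ : ℝ) (hρbound : ∀ p, ρ p ≤ ξ)
    (hti : ∀ x y z : EuclideanSpace ℝ (Fin d), ρ (x + z, y + z) = ρ (x, y))
    (hint : Integrable (fun y : EuclideanSpace ℝ (Fin d) => u y * ρ (y, 0)))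
    (r : ℝ) (hr : 0 < r) :
    limsup (fun ℓ : ℝ =>
        |((2 * ℓ) ^ d)⁻¹ * (∫ p in delta1 d ℓ r, u (p.1 - p.2) * ρ p) -
          ∫ y, u y * ρ (y, 0)|) atTop ≤
      ∫ y in {y : EuclideanSpace ℝ (Fin d) | r < ‖y‖}, |u y| * ρ (y, 0) := by
  set g : EuclideanSpace ℝ (Fin d) → ℝ := fun y => u y * ρ (y, 0) with hg
  set c : ℝ := ∫ y in Metric.closedBall (0 : EuclideanSpace ℝ (Fin d)) r, g y with hc
  set I : ℝ := ∫ y, g y with hI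
  -- the key computation of the Δ₁ integral for ℓ > r
  have key : ∀ ℓ : ℝ, r < ℓ →
      (∫ p in delta1 d ℓ r, u (p.1 - p.2) * ρ p) = (2 * (ℓ - r)) ^ d * c := by
    intro ℓ hℓ
    have hρ' : ∀ p : EuclideanSpace ℝ (Fin d) × EuclideanSpace ℝ (Fin d),
        ρ p = ρ (p.1 - p.2, 0) := by
      intro p
      have h := hti (p.1 - p.2) 0 p.2
      simpa using h
    have h1 : (fun p : EuclideanSpace ℝ (Fin d) × EuclideanSpace ℝ (Fin d) =>
        u (p.1 - p.2) * ρ p) = fun p => g (p.1 - p.2) := by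
      funext p
      rw [hρ' p]
    rw [h1]
    -- rewrite the set as a preimage under subEquiv of a product set
    have hset : delta1 d ℓ r = (subEquiv d) ⁻¹'
        ((lam d (ℓ - r)) ×ˢ Metric.closedBall (0 : EuclideanSpace ℝ (Fin d)) r) := by
      ext p
      simp only [delta1, Set.mem_setOf_eq, Set.mem_preimage, subEquiv, MeasurableEquiv.coe_mk,
        Equiv.coe_fn_mk, Set.mem_prod, Metric.mem_closedBall, dist_zero_right]
      constructor
      · rintro ⟨-, -, h3, h4⟩
        exact ⟨h3, by rwa [norm_sub_rev]⟩
      · rintro ⟨h3, h4⟩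
        rw [norm_sub_rev] at h4
        refine ⟨fun i => ?_, fun i => ?_, h3, h4⟩
        · exact le_trans (h3 i) (by linarith)
        · have : |p.2 i - p.1 i| ≤ ‖p.2 - p.1‖ := by
            simpa using coord_abs_le_norm (p.2 - p.1) i
          have h5 := h3 i
          calc |p.2 i| = |p.1 i + (p.2 i - p.1 i)| := by ring_nf
            _ ≤ |p.1 i| + |p.2 i - p.1 i| := abs_add_le _ _
            _ ≤ (ℓ - r) + r := add_le_add h5 (le_trans this h4)
            _ = ℓ := by ring
    rw [hset]
    have heq := (subEquiv_measurePreserving d).setIntegral_preimage_emb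
      (subEquiv d).measurableEmbedding
      (fun q : EuclideanSpace ℝ (Fin d) × EuclideanSpace ℝ (Fin d) => g q.2)
      ((lam d (ℓ - r)) ×ˢ Metric.closedBall (0 : EuclideanSpace ℝ (Fin d)) r)
    have h2 : (fun p : EuclideanSpace ℝ (Fin d) × EuclideanSpace ℝ (Fin d) =>
        g (p.1 - p.2)) = fun p => g ((subEquiv d p).2) := rfl
    rw [h2]
    rw [heq]
    -- now a product-set integral of a function of the second coordinate
    rw [Measure.volume_eq_prod]
    have h4 := setIntegral_prod_mul (μ := (volume : Measure (EuclideanSpace ℝ (Fin d))))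
      (ν := volume) (fun _ => (1:ℝ)) g (lam d (ℓ - r))
      (Metric.closedBall (0 : EuclideanSpace ℝ (Fin d)) r)
    have h5 : ∫ q in (lam d (ℓ - r)) ×ˢ Metric.closedBall (0 : EuclideanSpace ℝ (Fin d)) r,
        g q.2 ∂((volume : Measure (EuclideanSpace ℝ (Fin d))).prod volume)
        = (∫ _x in lam d (ℓ - r), (1:ℝ)) * c := by simpa using h4
    rw [h5, setIntegral_const]
    simp only [smul_eq_mul, mul_one]
    rw [measureReal_def, volume_lam]
    rw [ENNReal.toReal_pow, ENNReal.toReal_ofReal (by linarith)]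
  -- eventual rewriting of the function inside the limsup
  have hev : (fun ℓ : ℝ =>
        |((2 * ℓ) ^ d)⁻¹ * (∫ p in delta1 d ℓ r, u (p.1 - p.2) * ρ p) - I|)
      =ᶠ[atTop] fun ℓ : ℝ => |((2 * ℓ) ^ d)⁻¹ * ((2 * (ℓ - r)) ^ d * c) - I| := by
    filter_upwards [eventually_gt_atTop r] with ℓ hℓ
    rw [key ℓ hℓ]
  rw [limsup_congr hev]
  -- compute the limit
  have h1 : Tendsto (fun ℓ : ℝ => ((2 * ℓ) ^ d)⁻¹ * (2 * (ℓ - r)) ^ d) atTop (𝓝 1) := by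
    have h2 : Tendsto (fun ℓ : ℝ => (1 - r * ℓ⁻¹) ^ d) atTop (𝓝 1) := by
      have h3 : Tendsto (fun ℓ : ℝ => 1 - r * ℓ⁻¹) atTop (𝓝 1) := by
        have := (tendsto_const_nhds (x := (1:ℝ)) (f := (atTop : Filter ℝ))).sub
          (tendsto_inv_atTop_zero.const_mul r)
        simpa using this
      simpa using h3.pow d
    refine h2.congr' ?_
    filter_upwards [eventually_gt_atTop (0:ℝ)] with ℓ hℓ
    rw [eq_comm, inv_mul_eq_div, ← div_pow]
    congr 1
    field_simp
  have hlim : Tendsto (fun ℓ : ℝ => |((2 * ℓ) ^ d)⁻¹ * ((2 * (ℓ - r)) ^ d * c) - I|)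
      atTop (𝓝 |c - I|) := by
    have h4 : Tendsto (fun ℓ : ℝ => ((2 * ℓ) ^ d)⁻¹ * ((2 * (ℓ - r)) ^ d * c) - I)
        atTop (𝓝 (c - I)) := by
      have := (h1.mul_const c).sub_const I
      simpa [mul_assoc] using this
    exact h4.abs
  rw [hlim.limsup_eq]
  -- final bound
  have hcompl : (Metric.closedBall (0 : EuclideanSpace ℝ (Fin d)) r)ᶜ
      = {y : EuclideanSpace ℝ (Fin d) | r < ‖y‖} := by
    ext y
    simp [Metric.mem_closedBall, dist_zero_right, not_le]
  have hsplit : c + ∫ y in (Metric.closedBall (0 : EuclideanSpace ℝ (Fin d)) r)ᶜ, g y = I :=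
    integral_add_compl (measurableSet_closedBall) hint
  have habs : |c - I| = ‖∫ y in {y : EuclideanSpace ℝ (Fin d) | r < ‖y‖}, g y‖ := by
    rw [← hcompl, ← hsplit, Real.norm_eq_abs]
    rw [show c - (c + ∫ y in (Metric.closedBall (0 : EuclideanSpace ℝ (Fin d)) r)ᶜ, g y)
        = -(∫ y in (Metric.closedBall (0 : EuclideanSpace ℝ (Fin d)) r)ᶜ, g y) from by ring,
      abs_neg]
  rw [habs]
  calc ‖∫ y in {y : EuclideanSpace ℝ (Fin d) | r < ‖y‖}, g y‖
      ≤ ∫ y in {y : EuclideanSpace ℝ (Fin d) | r < ‖y‖}, ‖g y‖ :=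
        norm_integral_le_integral_norm _
    _ = ∫ y in {y : EuclideanSpace ℝ (Fin d) | r < ‖y‖}, |u y| * ρ (y, 0) := by
        refine integral_congr_ae (Filter.Eventually.of_forall fun y => ?_)
        simp only [hg, Real.norm_eq_abs, abs_mul]
        rw [abs_of_nonneg (hρnonneg _)]
end

section
/- (Specific energy identity, divergent case.) Let u ∈ 𝒰 and let ρ : ℝᵈ × ℝᵈ → [0,∞) be measurable, bounded by a constant ξ > 0, and translation invariant (ρ(x+z,y+z) = ρ(x,y) for all x,y,z). Assume that ∫_{ℝᵈ} max(u(y),0) ρ(y,0) dy = +∞. Then for every sufficiently large ℓ the extended-valued double integral ∫_{Λ_ℓ × Λ_ℓ} u(x−y) ρ(x,y) d(x,y), defined as ∫ max(u(x−y),0)ρ(x,y) − ∫ max(−u(x−y),0)ρ(x,y) (the second integral being finite), equals +∞; in particular lim_{ℓ→∞} (1/|Λ_ℓ|) ∫_{Λ_ℓ × Λ_ℓ} u(x−y) ρ(x,y) d(x,y) = +∞. -/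
open MeasureTheory ENNReal Filter

/-- The class 𝒰 of pair potentials: even measurable functions `u : ℝᵈ → ℝ ∪ {+∞}`
with a decreasing, non-integrable lower bound `φ` near the origin and a decreasing,
integrable majorant `ψ` of `|u|` away from the origin. -/
def memU (d : ℕ) (u : EuclideanSpace ℝ (Fin d) → EReal) : Prop :=
  Measurable u ∧ (∀ x, u (-x) = u x) ∧
  ∃ r₀ : ℝ, 0 < r₀ ∧
    (∃ φ : ℝ → ℝ,
      (∀ r ∈ Set.Ioc (0 : ℝ) r₀, 0 ≤ φ r) ∧
      AntitoneOn φ (Set.Ioc 0 r₀) ∧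
      (∫⁻ r in Set.Ioc (0 : ℝ) r₀, ENNReal.ofReal (r ^ (d - 1) * φ r)) = ⊤ ∧
      (∀ x : EuclideanSpace ℝ (Fin d), 0 < ‖x‖ → ‖x‖ ≤ r₀ → ((φ ‖x‖ : ℝ) : EReal) ≤ u x)) ∧
    (∃ ψ : ℝ → ℝ,
      (∀ r, r₀ ≤ r → 0 ≤ ψ r) ∧
      AntitoneOn ψ (Set.Ici r₀) ∧
      (∫⁻ r in Set.Ici r₀, ENNReal.ofReal (r ^ (d - 1) * ψ r)) < ⊤ ∧
      (∀ x : EuclideanSpace ℝ (Fin d), r₀ ≤ ‖x‖ → (u x).abs ≤ ENNReal.ofReal (ψ ‖x‖)))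

/-- The positive part `max(a, 0)` of an extended real, as an element of `ℝ≥0∞`. -/
noncomputable def eposPart (a : EReal) : ℝ≥0∞ := (a ⊔ 0).abs

/-- The negative part `max(-a, 0)` of an extended real, as an element of `ℝ≥0∞`. -/
noncomputable def enegPart (a : EReal) : ℝ≥0∞ := (-a ⊔ 0).abs

/-- `∫_{Λ_ℓ × Λ_ℓ} max(u(x-y), 0) ρ(x,y) d(x,y)`. -/
noncomputable def iPos {d : ℕ} (u : EuclideanSpace ℝ (Fin d) → EReal)
    (ρ : EuclideanSpace ℝ (Fin d) × EuclideanSpace ℝ (Fin d) → ℝ) (ℓ : ℝ) : ℝ≥0∞ :=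
  ∫⁻ p in (lam d ℓ) ×ˢ (lam d ℓ), eposPart (u (p.1 - p.2)) * ENNReal.ofReal (ρ p)

/-- `∫_{Λ_ℓ × Λ_ℓ} max(-u(x-y), 0) ρ(x,y) d(x,y)`. -/
noncomputable def iNeg {d : ℕ} (u : EuclideanSpace ℝ (Fin d) → EReal)
    (ρ : EuclideanSpace ℝ (Fin d) × EuclideanSpace ℝ (Fin d) → ℝ) (ℓ : ℝ) : ℝ≥0∞ :=
  ∫⁻ p in (lam d ℓ) ×ˢ (lam d ℓ), enegPart (u (p.1 - p.2)) * ENNReal.ofReal (ρ p)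

/-! ### Auxiliary lemmas -/

section Aux

open Set Metric

/-- Polar-coordinate formula for the Lebesgue integral of a function of the norm. -/
lemma lintegral_fun_norm_addHaar' {E : Type*} [NormedAddCommGroup E] [NormedSpace ℝ E]
    [MeasurableSpace E] [BorelSpace E] [Nontrivial E] [FiniteDimensional ℝ E]
    (μ : Measure E) [μ.IsAddHaarMeasure] {f : ℝ → ℝ≥0∞} (hf : Measurable f) :
    ∫⁻ x, f ‖x‖ ∂μ =
      μ.toSphere Set.univ *
        ∫⁻ r in Set.Ioi (0 : ℝ), ENNReal.ofReal (r ^ (Module.finrank ℝ E - 1)) * f r := by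
  have h0 : MeasurableSet ({0}ᶜ : Set E) := (measurableSet_singleton 0).compl
  have hg : Measurable (fun p : sphere (0:E) 1 × Set.Ioi (0:ℝ) => f p.2.1) :=
    hf.comp (measurable_subtype_coe.comp measurable_snd)
  have hmp := μ.measurePreserving_homeomorphUnitSphereProd.lintegral_comp
    (f := fun p : sphere (0:E) 1 × Set.Ioi (0:ℝ) => f p.2.1) hg
  simp only [homeomorphUnitSphereProd_apply_snd_coe] at hmp
  calc ∫⁻ x, f ‖x‖ ∂μ = ∫⁻ x in ({0}ᶜ : Set E), f ‖x‖ ∂μ := by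
        rw [restrict_compl_singleton]
    _ = ∫⁻ x : ({0}ᶜ : Set E), f ‖x.1‖ ∂(μ.comap (↑)) := (lintegral_subtype_comap h0 _).symm
    _ = ∫⁻ p : sphere (0:E) 1 × Set.Ioi (0:ℝ), f p.2.1
          ∂(μ.toSphere.prod (.volumeIoiPow (Module.finrank ℝ E - 1))) := hmp
    _ = μ.toSphere Set.univ *
          ∫⁻ r : Set.Ioi (0:ℝ), f r.1 ∂(Measure.volumeIoiPow (Module.finrank ℝ E - 1)) := by
        rw [MeasureTheory.lintegral_prod _ hg.aemeasurable]
        simp [lintegral_const, mul_comm]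
    _ = μ.toSphere Set.univ *
          ∫⁻ r in Set.Ioi (0:ℝ), ENNReal.ofReal (r ^ (Module.finrank ℝ E - 1)) * f r ∂volume := by
        have hwd := lintegral_withDensity_eq_lintegral_mul
          (Measure.comap Subtype.val volume : Measure (Set.Ioi (0:ℝ)))
          (f := fun r : Set.Ioi (0:ℝ) => ENNReal.ofReal (r.1 ^ (Module.finrank ℝ E - 1)))
          (g := fun r : Set.Ioi (0:ℝ) => f r.1)
          ((measurable_subtype_coe.pow_const _).ennreal_ofReal)
          (hf.comp measurable_subtype_coe)
        rw [Measure.volumeIoiPow, hwd,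
          ← lintegral_subtype_comap measurableSet_Ioi
            (fun r : ℝ => ENNReal.ofReal (r ^ (Module.finrank ℝ E - 1)) * f r)]
        rfl

lemma EReal.abs_le_abs' {x y : EReal} (hx : 0 ≤ x) (hxy : x ≤ y) : x.abs ≤ y.abs := by
  induction y with
  | bot => exact absurd (hx.trans hxy) (by simp)
  | coe y =>
    induction x with
    | bot => exact absurd hx (by simp)
    | coe x =>
      simp only [EReal.abs_def]
      exact ENNReal.ofReal_le_ofReal (by
        have hx' : (0:ℝ) ≤ x := by exact_mod_cast hx
        have hxy' : x ≤ y := by exact_mod_cast hxy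
        rw [abs_of_nonneg hx', abs_of_nonneg (hx'.trans hxy')]
        exact hxy')
    | top => exact absurd hxy (by simp)
  | top => simp

lemma eposPart_mono : Monotone eposPart := fun _ _ h =>
  EReal.abs_le_abs' le_sup_right (sup_le_sup_right h 0)

lemma eposPart_measurable : Measurable eposPart := eposPart_mono.measurable

lemma enegPart_eq_eposPart_neg (a : EReal) : enegPart a = eposPart (-a) := rfl

lemma enegPart_measurable : Measurable enegPart := by
  have : Antitone enegPart := fun a b h => eposPart_mono (EReal.neg_le_neg_iff.mpr h)
  exact this.measurable

lemma eposPart_le_abs (a : EReal) : eposPart a ≤ a.abs := by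
  induction a with
  | bot => simp [eposPart]
  | coe x =>
    have hc : ((x : EReal) ⊔ 0) = ((max x 0 : ℝ) : EReal) := by
      rcases le_total x 0 with h | h
      · rw [max_eq_right h, EReal.coe_zero]
        exact sup_eq_right.mpr (by exact_mod_cast h)
      · rw [max_eq_left h]
        exact sup_eq_left.mpr (by exact_mod_cast h)
    rw [eposPart, hc, EReal.abs_def]
    exact (EReal.abs_def x ▸ ENNReal.ofReal_le_ofReal (by
      rw [abs_of_nonneg (le_max_right x 0)]
      exact max_le (le_abs_self x) (abs_nonneg x)))
  | top => simp [eposPart]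

lemma enegPart_le_abs (a : EReal) : enegPart a ≤ a.abs := by
  rw [enegPart_eq_eposPart_neg, ← EReal.abs_neg a]; exact eposPart_le_abs _

lemma enegPart_of_nonneg {a : EReal} (h : 0 ≤ a) : enegPart a = 0 := by
  have hz : -a ⊔ 0 = 0 := sup_eq_right.mpr
    (by rw [← neg_zero]; exact EReal.neg_le_neg_iff.mpr h)
  rw [enegPart, hz, EReal.abs_zero]

variable {d : ℕ}

lemma abs_apply_le_norm (x : EuclideanSpace ℝ (Fin d)) (i : Fin d) : |x i| ≤ ‖x‖ := by
  rw [EuclideanSpace.norm_eq]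
  calc |x i| = Real.sqrt (|x i| ^ 2) := (Real.sqrt_sq (abs_nonneg _)).symm
    _ ≤ Real.sqrt (∑ j, ‖x j‖ ^ 2) := by
        apply Real.sqrt_le_sqrt
        have h : |x i| ^ 2 = ‖x i‖ ^ 2 := by rw [Real.norm_eq_abs]
        rw [h]
        exact Finset.single_le_sum (f := fun j => ‖x j‖ ^ 2)
          (fun j _ => sq_nonneg _) (Finset.mem_univ i)

lemma lam_isClosed (ℓ : ℝ) : IsClosed (lam d ℓ) := by
  have h : lam d ℓ = ⋂ i, (fun x : EuclideanSpace ℝ (Fin d) => x i) ⁻¹' (Set.Icc (-ℓ) ℓ) := by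
    ext x; simp [lam, abs_le]
  rw [h]
  exact isClosed_iInter fun i => IsClosed.preimage (by fun_prop) isClosed_Icc

lemma lam_measurableSet (ℓ : ℝ) : MeasurableSet (lam d ℓ) := (lam_isClosed ℓ).measurableSet

lemma lam_subset_closedBall (ℓ : ℝ) : lam d ℓ ⊆ Metric.closedBall 0 (Real.sqrt d * |ℓ|) := by
  intro x hx
  rw [mem_closedBall_zero_iff, EuclideanSpace.norm_eq]
  have h1 : ∑ j, ‖x j‖ ^ 2 ≤ ∑ _j : Fin d, ℓ ^ 2 := by
    apply Finset.sum_le_sum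
    intro j _
    rw [Real.norm_eq_abs, ← sq_abs ℓ]
    exact pow_le_pow_left₀ (abs_nonneg _) ((hx j).trans (le_abs_self ℓ)) 2
  calc Real.sqrt (∑ j, ‖x j‖ ^ 2) ≤ Real.sqrt (∑ _j : Fin d, ℓ ^ 2) := Real.sqrt_le_sqrt h1
    _ = Real.sqrt (d * ℓ ^ 2) := by rw [Finset.sum_const, Finset.card_univ, Fintype.card_fin,
          nsmul_eq_mul]
    _ = Real.sqrt d * |ℓ| := by rw [Real.sqrt_mul (Nat.cast_nonneg d), Real.sqrt_sq_eq_abs]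

lemma lam_volume_lt_top (ℓ : ℝ) : volume (lam d ℓ) < ⊤ :=
  ((measure_mono (lam_subset_closedBall ℓ)).trans_lt measure_closedBall_lt_top)

lemma ball_subset_lam (t : ℝ) : Metric.ball (0 : EuclideanSpace ℝ (Fin d)) t ⊆ lam d t := by
  intro x hx i
  rw [mem_ball_zero_iff] at hx
  exact (abs_apply_le_norm x i).trans hx.le

lemma lam_mono {s t : ℝ} (h : s ≤ t) : lam d s ⊆ lam d t := fun _ hx i => (hx i).trans h

lemma lam_volume_pos (hd : 1 ≤ d) {t : ℝ} (ht : 0 < t) : 0 < volume (lam d t) := by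
  haveI : Nonempty (Fin d) := ⟨⟨0, hd⟩⟩
  have h := Metric.measure_ball_pos (volume : Measure (EuclideanSpace ℝ (Fin d))) 0 ht
  exact h.trans_le (measure_mono (ball_subset_lam t))

lemma lintegral_sub_arg (x : EuclideanSpace ℝ (Fin d)) (h : EuclideanSpace ℝ (Fin d) → ℝ≥0∞) :
    ∫⁻ y, h (x - y) = ∫⁻ y, h y := by
  have h1 : ∀ y : EuclideanSpace ℝ (Fin d), x - y = -(y - x) := fun y => by abel
  simp_rw [h1]
  rw [lintegral_sub_right_eq_self (fun y => h (-y)) x]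
  have h2 := lintegral_map_equiv (μ := (volume : Measure (EuclideanSpace ℝ (Fin d)))) h
    (MeasurableEquiv.neg (EuclideanSpace ℝ (Fin d)))
  simp only [MeasurableEquiv.neg_apply, Measure.map_neg_eq_self] at h2
  exact h2.symm

end Aux

/-- Specific energy identity, divergent case: if `u ∈ 𝒰`, `ρ` is bounded and
translation invariant, and `∫ max(u(y),0) ρ(y,0) dy = +∞`, then for all sufficiently
large `ℓ` the extended-valued double integral over `Λ_ℓ × Λ_ℓ` equals `+∞` (its
negative part being finite), and in particular
`lim_{ℓ→∞} (1/|Λ_ℓ|) ∫_{Λ_ℓ × Λ_ℓ} u(x-y) ρ(x,y) d(x,y) = +∞`, with `|Λ_ℓ| = (2ℓ)^d`. -/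
theorem specific_energy_divergent {d : ℕ} (hd : 1 ≤ d)
    (u : EuclideanSpace ℝ (Fin d) → EReal) (hu : memU d u)
    (ξ : ℝ) (hξ : 0 < ξ)
    (ρ : EuclideanSpace ℝ (Fin d) × EuclideanSpace ℝ (Fin d) → ℝ)
    (hρmeas : Measurable ρ) (hρnonneg : ∀ p, 0 ≤ ρ p) (hρbound : ∀ p, ρ p ≤ ξ)
    (hti : ∀ x y z : EuclideanSpace ℝ (Fin d), ρ (x + z, y + z) = ρ (x, y))
    (hdiv : (∫⁻ y, eposPart (u y) * ENNReal.ofReal (ρ (y, 0))) = ⊤) :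
    (∃ ℓ₀ : ℝ, ∀ ℓ : ℝ, ℓ₀ ≤ ℓ → iNeg u ρ ℓ < ⊤ ∧ iPos u ρ ℓ = ⊤) ∧
    Tendsto (fun ℓ : ℝ =>
        (((((2 * ℓ) ^ d)⁻¹ : ℝ)) : EReal) *
          ((iPos u ρ ℓ : EReal) - (iNeg u ρ ℓ : EReal)))
      atTop (nhds (⊤ : EReal)) := by
  classical
  obtain ⟨humeas, -, r₀, hr₀, ⟨φ, hφ0, -, -, hφle⟩, ⟨ψ, hψ0, hψmono, hψint, hψle⟩⟩ := hu
  haveI : NeZero d := ⟨by omega⟩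
  haveI : Nontrivial (EuclideanSpace ℝ (Fin d)) := inferInstance
  -- the truncated tail majorant
  set ψ' : ℝ → ℝ := fun r => ψ (max r r₀) with hψ'def
  have hψ'anti : Antitone ψ' := fun a b hab =>
    hψmono (le_max_right a r₀) (le_max_right b r₀) (max_le_max hab le_rfl)
  set G : ℝ → ℝ≥0∞ := fun r => Set.indicator (Set.Ici r₀) (fun r => ENNReal.ofReal (ψ' r)) r
    with hGdef
  have hGmeas : Measurable G :=
    (hψ'anti.measurable.ennreal_ofReal).indicator measurableSet_Ici
  have hGval : ∀ r : ℝ, r₀ ≤ r → G r = ENNReal.ofReal (ψ r) := by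
    intro r hr
    simp only [hGdef, Set.indicator_of_mem (Set.mem_Ici.mpr hr), hψ'def, max_eq_left hr]
  have hGzero : ∀ r : ℝ, ¬ r₀ ≤ r → G r = 0 := by
    intro r hr
    simp only [hGdef, Set.indicator_of_notMem (fun h => hr (Set.mem_Ici.mp h))]
  -- finiteness of the integral of `G ∘ norm`
  have hIfin : (∫⁻ z : EuclideanSpace ℝ (Fin d), G ‖z‖) < ⊤ := by
    rw [lintegral_fun_norm_addHaar' volume hGmeas]
    refine ENNReal.mul_lt_top (measure_lt_top _ _) ?_
    have hdim : Module.finrank ℝ (EuclideanSpace ℝ (Fin d)) = d := by simp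
    rw [hdim]
    have hcong : ∀ r ∈ Set.Ioi (0:ℝ), ENNReal.ofReal (r ^ (d-1)) * G r
        = Set.indicator (Set.Ici r₀) (fun r => ENNReal.ofReal (r ^ (d-1) * ψ r)) r := by
      intro r hr
      by_cases h : r₀ ≤ r
      · rw [hGval r h, Set.indicator_of_mem (Set.mem_Ici.mpr h),
          ENNReal.ofReal_mul (pow_nonneg (le_of_lt (Set.mem_Ioi.mp hr)) _)]
      · rw [hGzero r h, Set.indicator_of_notMem (fun hh => h (Set.mem_Ici.mp hh)), mul_zero]
    rw [setLIntegral_congr_fun measurableSet_Ioi hcong,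
      lintegral_indicator measurableSet_Ici, Measure.restrict_restrict measurableSet_Ici]
    have hIci : Set.Ici r₀ ∩ Set.Ioi 0 = Set.Ici r₀ :=
      Set.inter_eq_left.mpr (fun r hr => lt_of_lt_of_le hr₀ hr)
    rw [hIci]
    exact hψint
  -- the core integrand
  set F : EuclideanSpace ℝ (Fin d) → ℝ≥0∞ :=
    fun z => eposPart (u z) * ENNReal.ofReal (ρ (z, 0)) with hFdef
  have hFmeas : Measurable F :=
    (eposPart_measurable.comp humeas).mul
      ((hρmeas.comp (measurable_id.prodMk measurable_const)).ennreal_ofReal)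
  have hFle : ∀ z : EuclideanSpace ℝ (Fin d), r₀ ≤ ‖z‖ →
      F z ≤ ENNReal.ofReal ξ * G ‖z‖ := by
    intro z hz
    rw [mul_comm]
    refine mul_le_mul' ?_ (ENNReal.ofReal_le_ofReal (hρbound _))
    rw [hGval _ hz]
    exact (eposPart_le_abs _).trans (hψle z hz)
  -- divergence concentrates in the closed ball of radius r₀
  have houter : (∫⁻ z in (Metric.closedBall (0 : EuclideanSpace ℝ (Fin d)) r₀)ᶜ, F z) < ⊤ := by
    have hb : ∀ z ∈ (Metric.closedBall (0 : EuclideanSpace ℝ (Fin d)) r₀)ᶜ,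
        F z ≤ ENNReal.ofReal ξ * G ‖z‖ := by
      intro z hz
      refine hFle z ?_
      simp only [Set.mem_compl_iff, Metric.mem_closedBall, dist_zero_right, not_le] at hz
      exact hz.le
    have hle := setLIntegral_mono (μ := (volume : Measure (EuclideanSpace ℝ (Fin d))))
      (g := fun z : EuclideanSpace ℝ (Fin d) => ENNReal.ofReal ξ * G ‖z‖)
      ((hGmeas.comp measurable_norm).const_mul _) hb
    refine lt_of_le_of_lt hle ?_
    refine lt_of_le_of_lt (setLIntegral_le_lintegral _ _) ?_
    rw [lintegral_const_mul' _ _ ENNReal.ofReal_ne_top]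
    exact ENNReal.mul_lt_top ENNReal.ofReal_lt_top hIfin
  have hcore : (∫⁻ z in Metric.closedBall (0 : EuclideanSpace ℝ (Fin d)) r₀, F z) = ⊤ := by
    by_contra h
    have hsum := lintegral_add_compl (μ := (volume : Measure (EuclideanSpace ℝ (Fin d)))) F
      (measurableSet_closedBall (x := (0 : EuclideanSpace ℝ (Fin d))) (ε := r₀))
    rw [hdiv] at hsum
    exact (ENNReal.add_ne_top.mpr ⟨h, houter.ne⟩) hsum
  -- translation invariance of ρ in the pair form
  have hρz : ∀ p : EuclideanSpace ℝ (Fin d) × EuclideanSpace ℝ (Fin d),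
      ρ p = ρ (p.1 - p.2, 0) := by
    intro p
    have h := hti (p.1 - p.2) 0 p.2
    rw [sub_add_cancel, zero_add] at h
    exact h
  have hprod_eq :
      (volume : Measure (EuclideanSpace ℝ (Fin d) × EuclideanSpace ℝ (Fin d)))
        = (volume : Measure (EuclideanSpace ℝ (Fin d))).prod volume :=
    Measure.volume_eq_prod _ _
  -- finiteness of iNeg
  have hiNeg : ∀ ℓ : ℝ, iNeg u ρ ℓ < ⊤ := by
    intro ℓ
    have hdiag : (volume : Measure (EuclideanSpace ℝ (Fin d) × EuclideanSpace ℝ (Fin d)))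
        {p | p.1 = p.2} = 0 := by
      rw [hprod_eq, Measure.prod_apply
        ((isClosed_eq continuous_fst continuous_snd).measurableSet)]
      have : ∀ x : EuclideanSpace ℝ (Fin d),
          (Prod.mk x ⁻¹' {p : EuclideanSpace ℝ (Fin d) × EuclideanSpace ℝ (Fin d) | p.1 = p.2})
            = {x} := by
        intro x; ext y; simp [eq_comm]
      simp [this]
    have hae : ∀ᵐ p : EuclideanSpace ℝ (Fin d) × EuclideanSpace ℝ (Fin d) ∂volume,
        p.1 ≠ p.2 := by
      rw [ae_iff]
      simpa [Classical.not_not] using hdiag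
    have hbound : ∀ᵐ p : EuclideanSpace ℝ (Fin d) × EuclideanSpace ℝ (Fin d) ∂volume,
        p ∈ (lam d ℓ) ×ˢ (lam d ℓ) →
          enegPart (u (p.1 - p.2)) * ENNReal.ofReal (ρ p)
            ≤ ENNReal.ofReal ξ * G ‖p.1 - p.2‖ := by
      filter_upwards [hae] with p hp _
      have hz : p.1 - p.2 ≠ 0 := sub_ne_zero.mpr hp
      rw [mul_comm (ENNReal.ofReal ξ)]
      refine mul_le_mul' ?_ (ENNReal.ofReal_le_ofReal (hρbound _))
      by_cases hcase : r₀ ≤ ‖p.1 - p.2‖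
      · rw [hGval _ hcase]
        exact (enegPart_le_abs _).trans (hψle _ hcase)
      · have h1 : 0 < ‖p.1 - p.2‖ := norm_pos_iff.mpr hz
        have h2 : ‖p.1 - p.2‖ ≤ r₀ := (not_le.mp hcase).le
        have h3 : (0 : EReal) ≤ u (p.1 - p.2) := by
          refine le_trans ?_ (hφle _ h1 h2)
          exact_mod_cast hφ0 _ ⟨h1, h2⟩
        rw [enegPart_of_nonneg h3]
        exact zero_le
    have h1 : iNeg u ρ ℓ ≤ ∫⁻ p in (lam d ℓ) ×ˢ (lam d ℓ),
        ENNReal.ofReal ξ * G ‖p.1 - p.2‖ := by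
      refine setLIntegral_mono_ae ?_ hbound
      exact (((hGmeas.comp (measurable_norm.comp
        (measurable_fst.sub measurable_snd))).const_mul _)).aemeasurable
    refine lt_of_le_of_lt h1 ?_
    rw [lintegral_const_mul' _ _ ENNReal.ofReal_ne_top]
    refine ENNReal.mul_lt_top ENNReal.ofReal_lt_top ?_
    have h2 : (∫⁻ p in (lam d ℓ) ×ˢ (lam d ℓ),
        G ‖p.1 - p.2‖ ∂(volume : Measure (EuclideanSpace ℝ (Fin d) × EuclideanSpace ℝ (Fin d))))
        ≤ (∫⁻ z : EuclideanSpace ℝ (Fin d), G ‖z‖) * volume (lam d ℓ) := by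
      have hGm2 : Measurable (fun p : EuclideanSpace ℝ (Fin d) × EuclideanSpace ℝ (Fin d) =>
          G ‖p.1 - p.2‖) := hGmeas.comp (measurable_norm.comp (measurable_fst.sub measurable_snd))
      rw [hprod_eq, ← Measure.prod_restrict,
        MeasureTheory.lintegral_prod
          (fun p : EuclideanSpace ℝ (Fin d) × EuclideanSpace ℝ (Fin d) => G ‖p.1 - p.2‖)
          hGm2.aemeasurable]
      calc ∫⁻ x in lam d ℓ, ∫⁻ y in lam d ℓ, G ‖x - y‖
          ≤ ∫⁻ _x in lam d ℓ, ∫⁻ z : EuclideanSpace ℝ (Fin d), G ‖z‖ := by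
            refine lintegral_mono fun x => ?_
            refine le_trans (setLIntegral_le_lintegral _ _) ?_
            rw [lintegral_sub_arg x (fun z => G ‖z‖)]
        _ = (∫⁻ z : EuclideanSpace ℝ (Fin d), G ‖z‖) * volume (lam d ℓ) :=
            setLIntegral_const _ _
    exact lt_of_le_of_lt h2 (ENNReal.mul_lt_top hIfin (lam_volume_lt_top ℓ))
  -- divergence of iPos for large ℓ
  have hiPos : ∀ ℓ : ℝ, r₀ + 1 ≤ ℓ → iPos u ρ ℓ = ⊤ := by
    intro ℓ hℓ
    set S : Set (EuclideanSpace ℝ (Fin d) × EuclideanSpace ℝ (Fin d)) :=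
      {p | p.1 ∈ lam d (ℓ - r₀) ∧ ‖p.1 - p.2‖ ≤ r₀} with hSdef
    have hSmeas : MeasurableSet S := by
      refine MeasurableSet.inter ((lam_measurableSet _).preimage measurable_fst) ?_
      exact (isClosed_le (continuous_norm.comp (continuous_fst.sub continuous_snd))
        continuous_const).measurableSet
    have hSsub : S ⊆ (lam d ℓ) ×ˢ (lam d ℓ) := by
      rintro ⟨x, y⟩ ⟨hx, hxy⟩
      constructor
      · exact lam_mono (by linarith) hx
      · intro i
        have h1 : |x i - y i| ≤ r₀ := by
          have := abs_apply_le_norm (x - y) i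
          simpa using this.trans hxy
        have h2 : |x i| ≤ ℓ - r₀ := hx i
        have := abs_sub_abs_le_abs_sub (y i) (x i)
        have h3 : |y i| ≤ |x i| + |y i - x i| := by
          calc |y i| = |x i + (y i - x i)| := by ring_nf
            _ ≤ |x i| + |y i - x i| := abs_add_le _ _
        rw [abs_sub_comm] at h3
        linarith
    have hmono := lintegral_mono_set (μ := (volume :
        Measure (EuclideanSpace ℝ (Fin d) × EuclideanSpace ℝ (Fin d))))
      (f := fun p => eposPart (u (p.1 - p.2)) * ENNReal.ofReal (ρ p)) hSsub
    refine top_le_iff.mp (le_trans ?_ hmono)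
    -- compute the integral over S
    have hcongr : ∀ p ∈ S, eposPart (u (p.1 - p.2)) * ENNReal.ofReal (ρ p) = F (p.1 - p.2) := by
      intro p _
      rw [hFdef]
      simp only []
      rw [← hρz p]
    rw [setLIntegral_congr_fun hSmeas hcongr]
    have hind : (∫⁻ p in S, F (p.1 - p.2)
        ∂(volume : Measure (EuclideanSpace ℝ (Fin d) × EuclideanSpace ℝ (Fin d))))
        = ∫⁻ p, S.indicator (fun p => F (p.1 - p.2)) p
          ∂(volume : Measure (EuclideanSpace ℝ (Fin d) × EuclideanSpace ℝ (Fin d))) :=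
      (lintegral_indicator hSmeas _).symm
    have hFm2 : Measurable (fun p : EuclideanSpace ℝ (Fin d) × EuclideanSpace ℝ (Fin d) =>
        S.indicator (fun p => F (p.1 - p.2)) p) :=
      Measurable.indicator (hFmeas.comp (measurable_fst.sub measurable_snd)) hSmeas
    rw [hind, hprod_eq,
      MeasureTheory.lintegral_prod
        (fun p : EuclideanSpace ℝ (Fin d) × EuclideanSpace ℝ (Fin d) =>
          S.indicator (fun p => F (p.1 - p.2)) p)
        hFm2.aemeasurable]
    have hinner : ∀ x ∈ lam d (ℓ - r₀),
        (∫⁻ y, S.indicator (fun p => F (p.1 - p.2)) (x, y)) = ⊤ := by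
      intro x hx
      have hfun : (fun y => S.indicator (fun p => F (p.1 - p.2)) (x, y))
          = fun y => (Metric.closedBall (0 : EuclideanSpace ℝ (Fin d)) r₀).indicator F (x - y) := by
        funext y
        by_cases h : ‖x - y‖ ≤ r₀
        · rw [Set.indicator_of_mem (show (x, y) ∈ S from ⟨hx, h⟩),
            Set.indicator_of_mem (by rwa [Metric.mem_closedBall, dist_zero_right])]
        · rw [Set.indicator_of_notMem (fun hh : (x, y) ∈ S => h hh.2),
            Set.indicator_of_notMem (by rwa [Metric.mem_closedBall, dist_zero_right])]
      rw [hfun, lintegral_sub_arg x, lintegral_indicator measurableSet_closedBall]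
      exact hcore
    refine top_le_iff.mpr ?_
    refine top_le_iff.mp ?_
    calc (⊤ : ℝ≥0∞) = ⊤ * volume (lam d (ℓ - r₀)) := by
          rw [ENNReal.top_mul (lam_volume_pos hd (by linarith)).ne']
      _ = ∫⁻ x in lam d (ℓ - r₀), (⊤ : ℝ≥0∞) := (setLIntegral_const _ _).symm
      _ = ∫⁻ x in lam d (ℓ - r₀), ∫⁻ y, S.indicator (fun p => F (p.1 - p.2)) (x, y) :=
          (setLIntegral_congr_fun (lam_measurableSet _)
            (fun x hx => (hinner x hx).symm))
      _ ≤ ∫⁻ x, ∫⁻ y, S.indicator (fun p => F (p.1 - p.2)) (x, y) :=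
          setLIntegral_le_lintegral _ _
  -- conclusion
  refine ⟨⟨r₀ + 1, fun ℓ hℓ => ⟨hiNeg ℓ, hiPos ℓ hℓ⟩⟩, ?_⟩
  have hev : ∀ᶠ ℓ : ℝ in atTop,
      (((((2 * ℓ) ^ d)⁻¹ : ℝ)) : EReal) *
        ((iPos u ρ ℓ : EReal) - (iNeg u ρ ℓ : EReal)) = ⊤ := by
    filter_upwards [eventually_ge_atTop (max (r₀ + 1) 1)] with ℓ hℓ
    have hℓ1 : (1 : ℝ) ≤ ℓ := le_trans (le_max_right _ _) hℓ
    have hℓr : r₀ + 1 ≤ ℓ := le_trans (le_max_left _ _) hℓ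
    have hpos : (0 : ℝ) < ((2 * ℓ) ^ d)⁻¹ := by
      refine inv_pos.mpr (pow_pos (by linarith) d)
    have hPos_top : ((iPos u ρ ℓ : ℝ≥0∞) : EReal) = ⊤ := by
      rw [hiPos ℓ hℓr]; exact EReal.coe_ennreal_top
    have hNeg_ne_top : ((iNeg u ρ ℓ : ℝ≥0∞) : EReal) ≠ ⊤ := by
      exact fun h => (hiNeg ℓ).ne (EReal.coe_ennreal_eq_top_iff.mp h)
    have hsub : (iPos u ρ ℓ : EReal) - (iNeg u ρ ℓ : EReal) = ⊤ := by
      rw [hPos_top, sub_eq_add_neg, EReal.top_add_of_ne_bot]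
      simp only [ne_eq, EReal.neg_eq_bot_iff]
      exact hNeg_ne_top
    rw [hsub]
    exact EReal.coe_mul_top_of_pos hpos
  exact Tendsto.congr' (by filter_upwards [hev] with ℓ h; exact h.symm) tendsto_const_nhds
end
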